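/- For any Had_k-to-2Lin(2) gadget G̃ with completeness c(G̃) = 1 − 2^{−k}, the relaxed soundness satisfies (1 − rs(G̃))/(1 − c(G̃)) ≤ 2, i.e., 1 − rs(G̃) ≤ 2^{1−k}. -/

import Mathlib

open Finset
open scoped Classical

noncomputable section

/-- Boolean functions `𝔽₂^k → {1,−1}`, encoded with `true ↦ −1` and `false ↦ 1`. -/
abbrev BF (k : ℕ) := (Fin k → ZMod 2) → Bool

/-- The negation `−f` of a Boolean function. -/
def negB {k : ℕ} (f : BF k) : BF k := fun x => !(f x)

/-- The linear character `χ_α` as a Boolean function: `χ_α(x) = −1` iff `⟨α,x⟩ = 1`. -/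
def chiB {k : ℕ} (α : Fin k → ZMod 2) : BF k := fun x => decide (dotProduct α x = 1)

/-- `x_f` is a primary variable iff `f = ±χ_α` for some `α ≠ 0`. -/
def Primary {k : ℕ} (f : BF k) : Prop :=
  ∃ α : Fin k → ZMod 2, α ≠ 0 ∧ (f = chiB α ∨ f = negB (chiB α))

/-- The constant function `1`. -/
def oneB (k : ℕ) : BF k := fun _ => false

/-- The constant function `−1`. -/
def negOneB (k : ℕ) : BF k := fun _ => true

/-- `val(A,G) = Σ_{pairs} G(f₁,f₂)[A(x_{f₁}) = A(x_{f₂})]` (each unordered pair counted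
once via the symmetric sum). -/
def valA {k : ℕ} (G : BF k → BF k → ℝ) (A : BF k → ZMod 2) : ℝ :=
  (1 / 2 : ℝ) * ∑ f₁, ∑ f₂, G f₁ f₂ * (if A f₁ = A f₂ then 1 else 0)

/-- Assignments folded on the primary variables. -/
def sFoldSet (k : ℕ) : Finset (BF k → ZMod 2) :=
  univ.filter fun P => ∀ f, Primary f → P (negB f) = 1 + P f

/-- The (true) soundness `s(G)`: the expectation, over uniformly random folded assignments
`P` of the primary variables, of the maximum of `val(A,G)` over folded extensions `A`
of `P`. -/
def soundness {k : ℕ} (G : BF k → BF k → ℝ) : ℝ :=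
  ((sFoldSet k).card : ℝ)⁻¹ * ∑ P ∈ sFoldSet k,
    sSup {v : ℝ | ∃ A : BF k → ZMod 2, (∀ f, A (negB f) = 1 + A f) ∧
      (∀ f, Primary f → A f = P f) ∧ v = valA G A}

/-- Assignments folded on the primary variables and on the constants `x_1, x_{−1}`. -/
def rsFoldSet (k : ℕ) : Finset (BF k → ZMod 2) :=
  univ.filter fun P => ∀ f, (Primary f ∨ f = oneB k ∨ f = negOneB k) →
    P (negB f) = 1 + P f

/-- Wiman's relaxed soundness `rs(G)`: as `s(G)`, but the assignments `P` are folded on the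
primary variables and the constants, and the extension `A` must agree with `P` there but is
not required to be folded on the auxiliary variables. -/
def rsoundness {k : ℕ} (G : BF k → BF k → ℝ) : ℝ :=
  ((rsFoldSet k).card : ℝ)⁻¹ * ∑ P ∈ rsFoldSet k,
    sSup {v : ℝ | ∃ A : BF k → ZMod 2,
      (∀ f, (Primary f ∨ f = oneB k ∨ f = negOneB k) → A f = P f) ∧ v = valA G A}

/-- The normalized Hamming distance between Boolean functions. -/
def ndistB {k : ℕ} (f₁ f₂ : BF k) : ℝ :=
  (2 ^ k : ℝ)⁻¹ * ∑ x, if f₁ x = f₂ x then (0 : ℝ) else 1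

/-- The completeness `c(G) = 1 − Σ G(f₁,f₂) dist(f₁,f₂)`. -/
def completeness {k : ℕ} (G : BF k → BF k → ℝ) : ℝ :=
  1 - (1 / 2 : ℝ) * ∑ f₁, ∑ f₂, G f₁ f₂ * ndistB f₁ f₂

/-- natural Hamming distance -/
def hdB {k : ℕ} (f g : BF k) : ℕ := (univ.filter fun x => ¬ (f x = g x)).card

lemma ndistB_eq_hdB {k : ℕ} (f g : BF k) : ndistB f g = (2 ^ k : ℝ)⁻¹ * (hdB f g : ℝ) := by
  unfold ndistB hdB
  congr 1
  rw [← Finset.sum_boole]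
  exact Finset.sum_congr rfl fun x _ => by by_cases h : f x = g x <;> simp [h]

lemma hdB_self {k : ℕ} (f : BF k) : hdB f f = 0 := by simp [hdB]

lemma hdB_comm {k : ℕ} (f g : BF k) : hdB f g = hdB g f := by
  unfold hdB; congr 1; exact Finset.filter_congr fun x _ => by tauto

lemma hdB_triangle {k : ℕ} (f g h : BF k) : hdB f h ≤ hdB f g + hdB g h := by
  unfold hdB
  refine le_trans (Finset.card_le_card ?_) (Finset.card_union_le _ _)
  intro x hx
  simp only [mem_filter, mem_union, mem_univ, true_and] at *
  by_cases h1 : f x = g x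
  · right; intro h2; exact hx (h1.trans h2)
  · left; exact h1

lemma hdB_negB_right {k : ℕ} (f g : BF k) : hdB f (negB g) = 2 ^ k - hdB f g := by
  have h1 : hdB f (negB g) + hdB f g = 2 ^ k := by
    unfold hdB
    have : (univ.filter fun x => ¬ (f x = negB g x)) = (univ.filter fun x => f x = g x) := by
      refine Finset.filter_congr fun x _ => ?_
      simp only [negB]
      cases f x <;> cases g x <;> simp
    rw [this]
    have := Finset.card_filter_add_card_filter_not (s := (univ : Finset (Fin k → ZMod 2)))
      (fun x => f x = g x)
    simpa [Finset.card_univ] using this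
  omega

lemma hdB_negB_negB {k : ℕ} (f g : BF k) : hdB (negB f) (negB g) = hdB f g := by
  unfold hdB; congr 1; refine Finset.filter_congr fun x _ => ?_
  simp only [negB]; cases f x <;> cases g x <;> simp

lemma zmod2_cases (a : ZMod 2) : a = 0 ∨ a = 1 := by revert a; decide

lemma card_dot_one {k : ℕ} (hk : 1 ≤ k) {γ : Fin k → ZMod 2} (hγ : γ ≠ 0) :
    (univ.filter fun x => dotProduct γ x = 1).card = 2 ^ (k - 1) := by
  obtain ⟨i, hi⟩ : ∃ i, γ i ≠ 0 := by
    by_contra h; push_neg at h; exact hγ (funext h)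
  have hγi : γ i = 1 := (zmod2_cases (γ i)).resolve_left hi
  set e : Fin k → ZMod 2 := Pi.single i 1 with he
  have hde : dotProduct γ e = 1 := by
    rw [he, dotProduct_single, hγi, one_mul]
  have hswap : ∀ x : Fin k → ZMod 2, dotProduct γ (x + e) = dotProduct γ x + 1 := by
    intro x; rw [dotProduct_add, hde]
  have hee : ∀ x : Fin k → ZMod 2, x + e + e = x := by
    intro x; funext j
    simp only [Pi.add_apply]
    have : ∀ a b : ZMod 2, a + b + b = a := by decide
    exact this _ _
  have hcardeq : (univ.filter fun x => dotProduct γ x = 1).card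
      = (univ.filter fun x => ¬ (dotProduct γ x = 1)).card := by
    apply Finset.card_bij (fun x _ => x + e)
    · intro x hx
      simp only [mem_filter, mem_univ, true_and] at *
      rw [hswap, hx]; decide
    · intro x hx y hy hxy
      have := congrArg (· + e) hxy
      simpa [hee] using this
    · intro y hy
      refine ⟨y + e, ?_, hee y⟩
      simp only [mem_filter, mem_univ, true_and] at *
      rw [hswap]
      rcases zmod2_cases (dotProduct γ y) with h | h
      · rw [h]; decide
      · exact absurd h hy
  have htot := Finset.card_filter_add_card_filter_not
    (s := (univ : Finset (Fin k → ZMod 2))) (fun x => dotProduct γ x = 1)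
  rw [Finset.card_univ] at htot
  have hcu : Fintype.card (Fin k → ZMod 2) = 2 ^ k := by
    simp [Fintype.card_fun]
  rw [hcu] at htot
  have h2 : 2 ^ k = 2 * 2 ^ (k - 1) := by
    rw [← pow_succ']; congr 1; omega
  omega

lemma hdB_chiB_ne {k : ℕ} (hk : 1 ≤ k) {α β : Fin k → ZMod 2} (h : α ≠ β) :
    hdB (chiB α) (chiB β) = 2 ^ (k - 1) := by
  unfold hdB
  have : (univ.filter fun x => ¬ (chiB α x = chiB β x))
      = (univ.filter fun x => dotProduct (α + β) x = 1) := by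
    refine Finset.filter_congr fun x _ => ?_
    simp only [chiB, add_dotProduct, decide_eq_decide]
    constructor
    · intro hne
      rcases zmod2_cases (dotProduct α x) with h1 | h1 <;>
        rcases zmod2_cases (dotProduct β x) with h2 | h2 <;>
        rw [h1, h2] <;> simp [h1, h2] at hne ⊢ <;> decide
    · intro hsum hiff
      rcases zmod2_cases (dotProduct α x) with h1 | h1 <;>
        rcases zmod2_cases (dotProduct β x) with h2 | h2 <;>
        rw [h1, h2] at hsum hiff <;> simp_all <;> exact absurd hsum (by decide)
  rw [this]
  apply card_dot_one hk
  intro hz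
  apply h; funext j
  have := congrFun hz j
  simp only [Pi.add_apply, Pi.zero_apply] at this
  have h2 : ∀ a b : ZMod 2, a + b = 0 → a = b := by decide
  exact h2 _ _ this

lemma oneB_eq_chiB_zero (k : ℕ) : oneB k = chiB (0 : Fin k → ZMod 2) := by
  funext x; simp [oneB, chiB, zero_dotProduct]

lemma term_rep {k : ℕ} {f : BF k} (hf : Primary f ∨ f = oneB k ∨ f = negOneB k) :
    ∃ α, f = chiB α ∨ f = negB (chiB α) := by
  rcases hf with ⟨α, _, h⟩ | h | h
  · exact ⟨α, h⟩
  · exact ⟨0, Or.inl (h.trans (oneB_eq_chiB_zero k))⟩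
  · refine ⟨0, Or.inr ?_⟩
    rw [h, ← oneB_eq_chiB_zero]
    funext x; simp [negOneB, negB, oneB]

lemma term_dist {k : ℕ} (hk : 1 ≤ k) {f g : BF k}
    (hf : Primary f ∨ f = oneB k ∨ f = negOneB k)
    (hg : Primary g ∨ g = oneB k ∨ g = negOneB k) (hne : f ≠ g) :
    2 ^ (k - 1) ≤ hdB f g := by
  obtain ⟨α, hα⟩ := term_rep hf
  obtain ⟨β, hβ⟩ := term_rep hg
  have hle : (2:ℕ) ^ (k - 1) ≤ 2 ^ k := Nat.pow_le_pow_right (by norm_num) (by omega)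
  rcases hα with hα | hα <;> rcases hβ with hβ | hβ <;> subst hα hβ
  · have : α ≠ β := fun h => hne (by rw [h])
    rw [hdB_chiB_ne hk this]
  · rw [hdB_negB_right]
    by_cases h : α = β
    · subst h; rw [hdB_self]; omega
    · rw [hdB_chiB_ne hk h]
      have h2 : (2:ℕ) ^ k = 2 * 2 ^ (k - 1) := by rw [← pow_succ']; congr 1; omega
      omega
  · rw [hdB_comm, hdB_negB_right]
    by_cases h : β = α
    · subst h; rw [hdB_self]; omega
    · rw [hdB_chiB_ne hk h]
      have h2 : (2:ℕ) ^ k = 2 * 2 ^ (k - 1) := by rw [← pow_succ']; congr 1; omega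
      omega
  · rw [hdB_negB_negB]
    have : α ≠ β := fun h => hne (by rw [h])
    rw [hdB_chiB_ne hk this]

/-- For any `Had_k`-to-`2Lin(2)` gadget `G̃` with completeness `1 − 2^{−k}`, the relaxed
soundness satisfies `(1 − rs(G̃))/(1 − c(G̃)) ≤ 2`, i.e. `1 − rs(G̃) ≤ 2^{1−k}`. -/
theorem rsoundness_ratio_le_two {k : ℕ} (hk : 2 ≤ k) (G : BF k → BF k → ℝ)
    (hGsymm : ∀ f₁ f₂, G f₁ f₂ = G f₂ f₁) (hG0 : ∀ f₁ f₂, 0 ≤ G f₁ f₂)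
    (hGdiag : ∀ f, G f f = 0) (hGneg : ∀ f, G f (negB f) = 0)
    (hGtot : (1 / 2 : ℝ) * ∑ f₁, ∑ f₂, G f₁ f₂ = 1)
    (hc : completeness G = 1 - (2 ^ k : ℝ)⁻¹) :
    1 - rsoundness G ≤ 2 * (2 ^ k : ℝ)⁻¹ := by
  have hk1 : 1 ≤ k := by omega
  have h2kpos : (0:ℝ) < 2 ^ k := by positivity
  set M : ℕ := 2 ^ (k - 1) with hM
  have hMpos : 0 < M := Nat.pow_pos (by norm_num)
  have hMcast : (M : ℝ) * 2 = 2 ^ k := by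
    rw [hM]
    push_cast
    rw [← pow_succ]
    congr 1
    omega
  -- From completeness: (1/2) ΣΣ G · hd = 1
  have hcs : (1/2:ℝ) * ∑ f₁, ∑ f₂, G f₁ f₂ * ndistB f₁ f₂ = (2^k:ℝ)⁻¹ := by
    unfold completeness at hc; linarith
  have hhd : (1/2:ℝ) * ∑ f₁, ∑ f₂, G f₁ f₂ * (hdB f₁ f₂ : ℝ) = 1 := by
    have hrw : ∑ f₁, ∑ f₂, G f₁ f₂ * ndistB f₁ f₂
        = (2^k:ℝ)⁻¹ * ∑ f₁, ∑ f₂, G f₁ f₂ * (hdB f₁ f₂:ℝ) := by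
      rw [Finset.mul_sum]
      refine Finset.sum_congr rfl fun f₁ _ => ?_
      rw [Finset.mul_sum]
      refine Finset.sum_congr rfl fun f₂ _ => ?_
      rw [ndistB_eq_hdB]; ring
    rw [hrw] at hcs
    have h2kne : (2^k:ℝ) ≠ 0 := ne_of_gt h2kpos
    field_simp at hcs
    nlinarith [hcs]
  -- the key per-P lower bound on the sup
  have key : ∀ P ∈ rsFoldSet k, 1 - 2*(2^k:ℝ)⁻¹ ≤ sSup {v : ℝ | ∃ A : BF k → ZMod 2,
      (∀ f, (Primary f ∨ f = oneB k ∨ f = negOneB k) → A f = P f) ∧ v = valA G A} := by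
    intro P hP
    simp only [rsFoldSet, Finset.mem_filter, Finset.mem_univ, true_and] at hP
    set S₀ : Finset (BF k) := univ.filter
      (fun g => (Primary g ∨ g = oneB k ∨ g = negOneB k) ∧ P g = 0) with hS₀def
    have hno : negB (oneB k) = negOneB k := by funext x; simp [negB, oneB, negOneB]
    have hS₀ne : S₀.Nonempty := by
      rcases zmod2_cases (P (oneB k)) with h | h
      · exact ⟨oneB k, by simp [hS₀def, h]⟩
      · refine ⟨negOneB k, ?_⟩
        have h1 := hP (oneB k) (Or.inr (Or.inl rfl))
        rw [hno, h] at h1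
        have : (1 + 1 : ZMod 2) = 0 := by decide
        rw [this] at h1
        simp [hS₀def, h1]
    set D : BF k → ℕ := fun f => S₀.inf' hS₀ne (fun g => hdB f g) with hD
    have hD0 : ∀ g ∈ S₀, D g = 0 := fun g hg =>
      le_antisymm ((Finset.inf'_le _ hg).trans_eq (hdB_self g)) (Nat.zero_le _)
    have hDM : ∀ g, (Primary g ∨ g = oneB k ∨ g = negOneB k) → P g ≠ 0 → M ≤ D g := by
      intro g hg hPg
      apply Finset.le_inf'
      intro b hb
      simp only [hS₀def, Finset.mem_filter, Finset.mem_univ, true_and] at hb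
      rw [hdB_comm]
      exact term_dist hk1 hb.1 hg (fun h => hPg (h ▸ hb.2))
    have hLip : ∀ f₁ f₂, D f₁ ≤ D f₂ + hdB f₁ f₂ := by
      intro f₁ f₂
      obtain ⟨g, hg, hgeq⟩ := Finset.exists_mem_eq_inf' hS₀ne (fun g => hdB f₂ g)
      calc D f₁ ≤ hdB f₁ g := Finset.inf'_le _ hg
      _ ≤ hdB f₁ f₂ + hdB f₂ g := hdB_triangle _ _ _
      _ = D f₂ + hdB f₁ f₂ := by
        have hg2 : D f₂ = hdB f₂ g := hgeq
        omega
    set Aa : ℕ → (BF k → ZMod 2) := fun t f => if D f ≤ t then 0 else 1 with hAa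
    have hcons : ∀ t, t < M → ∀ f, (Primary f ∨ f = oneB k ∨ f = negOneB k) →
        Aa t f = P f := by
      intro t ht f hf
      rcases zmod2_cases (P f) with h | h
      · have hf0 : f ∈ S₀ := by simp [hS₀def, hf, h]
        simp [hAa, hD0 f hf0, Nat.zero_le t, h]
      · have hDf : M ≤ D f := hDM f hf (by rw [h]; decide)
        have : ¬ D f ≤ t := by omega
        simp [hAa, this, h]
    -- value identity
    set Cut : ℕ → ℝ := fun t =>
      (1/2:ℝ) * ∑ f₁, ∑ f₂, G f₁ f₂ * (if Aa t f₁ = Aa t f₂ then (0:ℝ) else 1) with hCut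
    have hval : ∀ t, valA G (Aa t) = 1 - Cut t := by
      intro t
      unfold valA
      have hpt : ∀ f₁ f₂ : BF k, G f₁ f₂ * (if Aa t f₁ = Aa t f₂ then (1:ℝ) else 0)
          = G f₁ f₂ - G f₁ f₂ * (if Aa t f₁ = Aa t f₂ then (0:ℝ) else 1) := by
        intro f₁ f₂; by_cases h : Aa t f₁ = Aa t f₂ <;> simp [h]
      simp only [hpt, Finset.sum_sub_distrib]
      rw [mul_sub, hGtot, hCut]
    -- counting bound
    have hcount : ∀ f₁ f₂ : BF k,
        ∑ t ∈ Finset.range M, (if Aa t f₁ = Aa t f₂ then (0:ℝ) else 1) ≤ (hdB f₁ f₂ : ℝ) := by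
      intro f₁ f₂
      have heq : ∑ t ∈ Finset.range M, (if Aa t f₁ = Aa t f₂ then (0:ℝ) else 1)
          = (((Finset.range M).filter (fun t => ¬ (Aa t f₁ = Aa t f₂))).card : ℝ) := by
        rw [← Finset.sum_boole]
        exact Finset.sum_congr rfl fun t _ => by
          by_cases h : Aa t f₁ = Aa t f₂ <;> simp [h]
      rw [heq]
      have hsub : ((Finset.range M).filter (fun t => ¬ (Aa t f₁ = Aa t f₂)))
          ⊆ Finset.Ico (min (D f₁) (D f₂)) (max (D f₁) (D f₂)) := by
        intro t ht
        simp only [Finset.mem_filter, Finset.mem_range] at ht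
        obtain ⟨_, hne⟩ := ht
        rw [Finset.mem_Ico]
        by_cases h1 : D f₁ ≤ t <;> by_cases h2 : D f₂ ≤ t
        · exact absurd (by simp [hAa, h1, h2]) hne
        · constructor <;> omega
        · constructor <;> omega
        · exact absurd (by simp [hAa, h1, h2]) hne
      have hcard : ((Finset.range M).filter (fun t => ¬ (Aa t f₁ = Aa t f₂))).card
          ≤ hdB f₁ f₂ := by
        refine le_trans (Finset.card_le_card hsub) ?_
        rw [Nat.card_Ico]
        have l1 := hLip f₁ f₂
        have l2 := hLip f₂ f₁
        have l3 : hdB f₂ f₁ = hdB f₁ f₂ := hdB_comm _ _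
        omega
      exact_mod_cast hcard
    -- sum of cuts is at most 1
    have hsumcut : ∑ t ∈ Finset.range M, Cut t ≤ 1 := by
      have hswap : ∑ t ∈ Finset.range M, Cut t
          = (1/2:ℝ) * ∑ f₁, ∑ f₂, G f₁ f₂ *
            ∑ t ∈ Finset.range M, (if Aa t f₁ = Aa t f₂ then (0:ℝ) else 1) := by
        simp only [hCut]
        rw [← Finset.mul_sum]
        congr 1
        rw [Finset.sum_comm]
        refine Finset.sum_congr rfl fun f₁ _ => ?_
        rw [Finset.sum_comm]
        refine Finset.sum_congr rfl fun f₂ _ => ?_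
        rw [Finset.mul_sum]
      rw [hswap]
      have hle2 : ∑ f₁, ∑ f₂, G f₁ f₂ *
            ∑ t ∈ Finset.range M, (if Aa t f₁ = Aa t f₂ then (0:ℝ) else 1)
          ≤ ∑ f₁, ∑ f₂, G f₁ f₂ * (hdB f₁ f₂ : ℝ) := by
        refine Finset.sum_le_sum fun f₁ _ => Finset.sum_le_sum fun f₂ _ => ?_
        exact mul_le_mul_of_nonneg_left (hcount f₁ f₂) (hG0 f₁ f₂)
      linarith
    -- there is a good threshold
    have hex : ∃ t < M, Cut t ≤ 2*(2^k:ℝ)⁻¹ := by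
      by_contra hcon
      push_neg at hcon
      have hlt : ∀ t ∈ Finset.range M, 2*(2^k:ℝ)⁻¹ < Cut t := by
        intro t ht; exact hcon t (Finset.mem_range.mp ht)
      have h1 : ∑ _t ∈ Finset.range M, 2*(2^k:ℝ)⁻¹ < ∑ t ∈ Finset.range M, Cut t :=
        Finset.sum_lt_sum_of_nonempty ⟨0, Finset.mem_range.mpr hMpos⟩ hlt
      rw [Finset.sum_const, Finset.card_range, nsmul_eq_mul] at h1
      have h2 : (M:ℝ) * (2*(2^k:ℝ)⁻¹) = 1 := by
        rw [← mul_assoc, hMcast]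
        field_simp
      linarith
    obtain ⟨t, htM, htc⟩ := hex
    -- conclude with the sSup
    have hmem : valA G (Aa t) ∈ {v : ℝ | ∃ A : BF k → ZMod 2,
        (∀ f, (Primary f ∨ f = oneB k ∨ f = negOneB k) → A f = P f) ∧ v = valA G A} :=
      ⟨Aa t, hcons t htM, rfl⟩
    have hbdd : BddAbove {v : ℝ | ∃ A : BF k → ZMod 2,
        (∀ f, (Primary f ∨ f = oneB k ∨ f = negOneB k) → A f = P f) ∧ v = valA G A} := by
      refine (Set.Finite.bddAbove (Set.finite_range (valA G))).mono ?_
      rintro v ⟨A, _, rfl⟩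
      exact ⟨A, rfl⟩
    refine le_trans ?_ (le_csSup hbdd hmem)
    rw [hval t]
    linarith
  -- assemble
  have hne : (rsFoldSet k).Nonempty := by
    refine ⟨(fun f => if f 0 = true then 1 else 0), ?_⟩
    simp only [rsFoldSet, Finset.mem_filter, Finset.mem_univ, true_and]
    intro f _
    simp only [negB]
    by_cases h : f 0 = true <;> simp [h] <;> decide
  have hcardpos : (0:ℝ) < ((rsFoldSet k).card : ℝ) := by
    exact_mod_cast Finset.card_pos.mpr hne
  have hfinal : 1 - 2*(2^k:ℝ)⁻¹ ≤ rsoundness G := by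
    unfold rsoundness
    have h1 : ((rsFoldSet k).card : ℝ) * (1 - 2*(2^k:ℝ)⁻¹)
        ≤ ∑ P ∈ rsFoldSet k, sSup {v : ℝ | ∃ A : BF k → ZMod 2,
          (∀ f, (Primary f ∨ f = oneB k ∨ f = negOneB k) → A f = P f) ∧ v = valA G A} := by
      have := Finset.card_nsmul_le_sum (rsFoldSet k) _ _ key
      rwa [nsmul_eq_mul] at this
    calc 1 - 2*(2^k:ℝ)⁻¹
        = ((rsFoldSet k).card : ℝ)⁻¹ * (((rsFoldSet k).card : ℝ) * (1 - 2*(2^k:ℝ)⁻¹)) := by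
          field_simp
      _ ≤ _ := mul_le_mul_of_nonneg_left h1 (inv_nonneg.mpr hcardpos.le)
  linarith

end
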